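/- Let G be a simple graph on n ≥ 3 vertices with Sombor energy E(G) and forgotten index F. Then 2√F ≤ E(G) ≤ √(2nF). Equality in the upper bound holds if and only if G is the empty graph or a perfect matching (n/2)K_2; if G is connected, equality in the lower bound holds if and only if G is a complete bipartite graph K_{s,t} with s+t = n. -/

import Mathlib

open scoped Classical

noncomputable def somborMatrix {V : Type*} [Fintype V] (G : SimpleGraph V) :
    Matrix V V ℝ := fun i j =>
  if G.Adj i j then Real.sqrt ((G.degree i : ℝ) ^ 2 + (G.degree j : ℝ) ^ 2) else 0

lemma somborMatrix_isHermitian {V : Type*} [Fintype V] (G : SimpleGraph V) :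
    (somborMatrix G).IsHermitian := by
  apply Matrix.ext
  intro i j
  simp only [Matrix.conjTranspose_apply, star_trivial, somborMatrix]
  rw [G.adj_comm, add_comm]

/-- The Sombor eigenvalues of `G`. -/
noncomputable def somborEigs {V : Type*} [Fintype V] (G : SimpleGraph V) : V → ℝ :=
  (somborMatrix_isHermitian G).eigenvalues

/-- The Sombor spectral radius (largest Sombor eigenvalue). -/
noncomputable def somborSpecRad {V : Type*} [Fintype V] (G : SimpleGraph V) : ℝ :=
  ⨆ i, somborEigs G i

/-- The Sombor energy. -/
noncomputable def somborEnergy {V : Type*} [Fintype V] (G : SimpleGraph V) : ℝ :=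
  ∑ i, |somborEigs G i|

/-- The Sombor Estrada index. -/
noncomputable def somborEstrada {V : Type*} [Fintype V] (G : SimpleGraph V) : ℝ :=
  ∑ i, Real.exp (somborEigs G i)

/-- The forgotten topological index `F = ∑ d_i ^ 3`. -/
noncomputable def forgottenIndex {V : Type*} [Fintype V] (G : SimpleGraph V) : ℝ :=
  ∑ i, (G.degree i : ℝ) ^ 3

section Basic
variable {W : Type*} [Fintype W] (G : SimpleGraph W)

lemma sombor_nonneg (i j : W) : 0 ≤ somborMatrix G i j := by
  unfold somborMatrix
  split
  · exact Real.sqrt_nonneg _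
  · exact le_refl 0

lemma sombor_pos_of_adj {i j : W} (h : G.Adj i j) : 0 < somborMatrix G i j := by
  have hd : 0 < G.degree i := (G.degree_pos_iff_exists_adj i).2 ⟨j, h⟩
  have : (0:ℝ) < (G.degree i : ℝ)^2 + (G.degree j : ℝ)^2 := by
    have : (0:ℝ) < (G.degree i : ℝ) := by exact_mod_cast hd
    positivity
  simpa [somborMatrix, h] using Real.sqrt_pos.2 this

lemma sombor_ne_zero_iff (i j : W) : somborMatrix G i j ≠ 0 ↔ G.Adj i j := by
  constructor
  · intro h
    by_contra hadj
    exact h (by simp [somborMatrix, hadj])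
  · intro h; exact (sombor_pos_of_adj G h).ne'

lemma sombor_sq (i j : W) :
    (somborMatrix G i j)^2 =
      if G.Adj i j then (G.degree i : ℝ)^2 + (G.degree j : ℝ)^2 else 0 := by
  unfold somborMatrix
  split
  · exact Real.sq_sqrt (by positivity)
  · simp
end Basic

lemma spectral_theorem_old {m : Type*} [Fintype m] {A : Matrix m m ℝ} (hA : A.IsHermitian) :
    A = (hA.eigenvectorUnitary : Matrix m m ℝ) * Matrix.diagonal (RCLike.ofReal ∘ hA.eigenvalues)
      * star (hA.eigenvectorUnitary : Matrix m m ℝ) := by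
  conv_lhs => rw [hA.spectral_theorem]
  rw [Unitary.conjStarAlgAut_apply]

section Trace
variable {m : Type*} [Fintype m] {A : Matrix m m ℝ}

lemma myTrace (hA : A.IsHermitian) : A.trace = ∑ i, hA.eigenvalues i := by
  have h1 : star (hA.eigenvectorUnitary : Matrix m m ℝ) * (hA.eigenvectorUnitary : Matrix m m ℝ)
      = 1 := Matrix.mem_unitaryGroup_iff'.mp hA.eigenvectorUnitary.2
  conv_lhs => rw [spectral_theorem_old hA]
  rw [Matrix.mul_assoc, Matrix.trace_mul_comm, Matrix.mul_assoc, h1, Matrix.mul_one,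
    Matrix.trace_diagonal]
  simp [RCLike.ofReal_real_eq_id]

lemma myTraceSq (hA : A.IsHermitian) : (A * A).trace = ∑ i, hA.eigenvalues i ^ 2 := by
  have h1 : star (hA.eigenvectorUnitary : Matrix m m ℝ) * (hA.eigenvectorUnitary : Matrix m m ℝ)
      = 1 := Matrix.mem_unitaryGroup_iff'.mp hA.eigenvectorUnitary.2
  have h2 : A * A = (hA.eigenvectorUnitary : Matrix m m ℝ) *
      (Matrix.diagonal (RCLike.ofReal ∘ hA.eigenvalues) *
        Matrix.diagonal (RCLike.ofReal ∘ hA.eigenvalues)) *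
      star (hA.eigenvectorUnitary : Matrix m m ℝ) := by
    conv_lhs => rw [spectral_theorem_old hA]
    simp only [Matrix.mul_assoc]
    rw [← Matrix.mul_assoc (star (hA.eigenvectorUnitary : Matrix m m ℝ))
      (hA.eigenvectorUnitary : Matrix m m ℝ), h1, Matrix.one_mul]
  rw [h2, Matrix.mul_assoc, Matrix.trace_mul_comm, Matrix.mul_assoc, h1, Matrix.mul_one,
    Matrix.diagonal_mul_diagonal, Matrix.trace_diagonal]
  simp [RCLike.ofReal_real_eq_id, sq]

end Trace

variable {n : Type*} [Fintype n] (G : SimpleGraph n)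

lemma sum_somborEigs : ∑ i, somborEigs G i = 0 := by
  rw [somborEigs, ← myTrace (somborMatrix_isHermitian G)]
  have : ∀ i, somborMatrix G i i = 0 := by
    intro i; simp [somborMatrix]
  simp [Matrix.trace, Matrix.diag, this]

lemma sombor_symm (i j : n) : somborMatrix G j i = somborMatrix G i j := by
  unfold somborMatrix
  rw [G.adj_comm, add_comm]

lemma sum_ite_adj (i : n) (c : ℝ) :
    ∑ j, (if G.Adj i j then c else 0) = c * G.degree i := by
  have h1 : ∑ j, (if G.Adj i j then c else 0) = ∑ j, c * (if G.Adj i j then (1:ℝ) else 0) := by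
    congr 1; ext j; split <;> simp
  rw [h1, ← Finset.mul_sum, Finset.sum_boole]
  have h2 : Finset.univ.filter (fun j => G.Adj i j) = G.neighborFinset i := by
    ext x; simp [SimpleGraph.mem_neighborFinset]
  rw [h2, SimpleGraph.degree]

lemma sum_sq_somborEigs : ∑ i, somborEigs G i ^ 2 = 2 * forgottenIndex G := by
  rw [somborEigs, ← myTraceSq (somborMatrix_isHermitian G)]
  have h1 : (somborMatrix G * somborMatrix G).trace = ∑ i, ∑ j, (somborMatrix G i j)^2 := by
    simp only [Matrix.trace, Matrix.diag, Matrix.mul_apply]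
    congr 1; ext i; congr 1; ext j
    rw [sombor_symm, sq]
  rw [h1]
  have h2 : ∀ i j : n, (somborMatrix G i j)^2 =
      (if G.Adj i j then (G.degree i : ℝ)^2 else 0) +
      (if G.Adj i j then (G.degree j : ℝ)^2 else 0) := by
    intro i j; rw [sombor_sq]; split <;> simp
  simp only [h2, Finset.sum_add_distrib]
  have h3 : ∑ i : n, ∑ j : n, (if G.Adj i j then (G.degree i : ℝ)^2 else 0)
      = forgottenIndex G := by
    unfold forgottenIndex
    congr 1; ext i
    rw [sum_ite_adj]
    ring
  have h4 : ∑ i : n, ∑ j : n, (if G.Adj i j then (G.degree j : ℝ)^2 else 0)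
      = forgottenIndex G := by
    rw [Finset.sum_comm]
    rw [← h3]
    congr 1; ext j; congr 1; ext i
    rw [G.adj_comm]
  rw [h3, h4]; ring

section Sums
variable {ι : Type*} [Fintype ι]

lemma sum_sq_le_sq_sum (f : ι → ℝ) (hf : ∀ i, 0 ≤ f i) :
    ∑ i, f i ^ 2 ≤ (∑ i, f i) ^ 2 := by
  rw [sq (∑ i, f i), Finset.sum_mul]
  apply Finset.sum_le_sum
  intro i _
  rw [sq]
  exact mul_le_mul_of_nonneg_left
    (Finset.single_le_sum (fun j _ => hf j) (Finset.mem_univ i)) (hf i)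

lemma sum_sq_lt_sq_sum (f : ι → ℝ) (hf : ∀ i, 0 ≤ f i) {p q : ι} (hpq : p ≠ q)
    (hp : 0 < f p) (hq : 0 < f q) : ∑ i, f i ^ 2 < (∑ i, f i) ^ 2 := by
  rw [sq (∑ i, f i), Finset.sum_mul]
  apply Finset.sum_lt_sum
  · intro i _
    rw [sq]
    exact mul_le_mul_of_nonneg_left
      (Finset.single_le_sum (fun j _ => hf j) (Finset.mem_univ i)) (hf i)
  · refine ⟨p, Finset.mem_univ p, ?_⟩
    rw [sq]
    apply mul_lt_mul_of_pos_left _ hp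
    have h1 : f p + f q ≤ ∑ i, f i := by
      rw [← Finset.sum_pair hpq]
      exact Finset.sum_le_sum_of_subset_of_nonneg (Finset.subset_univ _)
        (fun i _ _ => hf i)
    linarith

lemma sum_sq_eq_sq_sum (f : ι → ℝ) (hf : ∀ i, 0 ≤ f i)
    (h : ∀ p q, p ≠ q → 0 < f p → 0 < f q → False) :
    ∑ i, f i ^ 2 = (∑ i, f i) ^ 2 := by
  by_cases hex : ∃ p, 0 < f p
  · obtain ⟨p, hp⟩ := hex
    have hz : ∀ i, i ≠ p → f i = 0 := by
      intro i hi
      rcases lt_or_eq_of_le (hf i) with h1 | h1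
      · exact absurd (h i p hi h1 hp) (fun x => x)
      · exact h1.symm
    rw [Finset.sum_eq_single p (fun b _ hb => by rw [hz b hb]; ring)
      (fun hc => absurd (Finset.mem_univ p) hc),
      Finset.sum_eq_single p (fun b _ hb => hz b hb)
      (fun hc => absurd (Finset.mem_univ p) hc)]
  · push_neg at hex
    have hz : ∀ i, f i = 0 := fun i => le_antisymm (hex i) (hf i)
    simp [hz]

lemma sq_identity (f : ι → ℝ) :
    ∑ i, ∑ j, (f i - f j)^2
      = 2 * (Fintype.card ι) * (∑ i, f i ^ 2) - 2 * (∑ i, f i) ^ 2 := by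
  have h1 : ∀ i, ∑ j, (f i - f j)^2
      = (Fintype.card ι) * f i ^ 2 - 2 * f i * (∑ j, f j) + ∑ j, f j ^ 2 := by
    intro i
    have : ∀ j, (f i - f j)^2 = f i ^ 2 - 2 * f i * f j + f j ^ 2 := by intro j; ring
    simp only [this, Finset.sum_add_distrib, Finset.sum_sub_distrib, Finset.sum_const,
      Finset.card_univ, nsmul_eq_mul, ← Finset.mul_sum]
  simp only [h1, Finset.sum_add_distrib, Finset.sum_sub_distrib, Finset.sum_const,
    Finset.card_univ, nsmul_eq_mul, ← Finset.mul_sum, ← Finset.sum_mul]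
  ring

lemma sq_sum_le_card_mul (f : ι → ℝ) :
    (∑ i, f i) ^ 2 ≤ (Fintype.card ι) * ∑ i, f i ^ 2 := by
  have h0 : 0 ≤ ∑ i, ∑ j, (f i - f j)^2 :=
    Finset.sum_nonneg fun i _ => Finset.sum_nonneg fun j _ => sq_nonneg _
  rw [sq_identity f] at h0
  linarith

lemma all_eq_of_sq_sum_eq (f : ι → ℝ)
    (h : (∑ i, f i) ^ 2 = (Fintype.card ι) * ∑ i, f i ^ 2) :
    ∀ i j, f i = f j := by
  have h0 : ∑ i, ∑ j, (f i - f j)^2 = 0 := by rw [sq_identity f]; linarith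
  intro i j
  have h1 := (Finset.sum_eq_zero_iff_of_nonneg
    (fun i _ => Finset.sum_nonneg fun j _ => sq_nonneg _)).1 h0 i (Finset.mem_univ i)
  have h2 := (Finset.sum_eq_zero_iff_of_nonneg (fun j _ => sq_nonneg _)).1 h1 j
    (Finset.mem_univ j)
  have := sq_eq_zero_iff.1 h2
  linarith

end Sums

section Spectral1
variable {m : Type*} [Fintype m] {A : Matrix m m ℝ}

lemma col_dot (hA : A.IsHermitian) (k l : m) :
    ∑ i, (hA.eigenvectorUnitary : Matrix m m ℝ) i k * (hA.eigenvectorUnitary : Matrix m m ℝ) i l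
      = if k = l then (1:ℝ) else 0 := by
  have h1 : star (hA.eigenvectorUnitary : Matrix m m ℝ) * (hA.eigenvectorUnitary : Matrix m m ℝ)
      = 1 := Matrix.mem_unitaryGroup_iff'.mp hA.eigenvectorUnitary.2
  have h2 := congrFun (congrFun h1 k) l
  simpa [Matrix.mul_apply, Matrix.star_apply, Matrix.one_apply] using h2

lemma mulU_eq (hA : A.IsHermitian) :
    A * (hA.eigenvectorUnitary : Matrix m m ℝ)
      = (hA.eigenvectorUnitary : Matrix m m ℝ)
        * Matrix.diagonal (RCLike.ofReal ∘ hA.eigenvalues) := by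
  calc A * (hA.eigenvectorUnitary : Matrix m m ℝ)
      = ((hA.eigenvectorUnitary : Matrix m m ℝ)
          * Matrix.diagonal (RCLike.ofReal ∘ hA.eigenvalues)
          * star (hA.eigenvectorUnitary : Matrix m m ℝ))
          * (hA.eigenvectorUnitary : Matrix m m ℝ) := by rw [← spectral_theorem_old hA]
    _ = (hA.eigenvectorUnitary : Matrix m m ℝ)
          * Matrix.diagonal (RCLike.ofReal ∘ hA.eigenvalues)
          * (star (hA.eigenvectorUnitary : Matrix m m ℝ)
            * (hA.eigenvectorUnitary : Matrix m m ℝ)) := by rw [Matrix.mul_assoc]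
    _ = _ := by rw [Matrix.mem_unitaryGroup_iff'.mp hA.eigenvectorUnitary.2, Matrix.mul_one]

lemma eigencol (hA : A.IsHermitian) (k : m) (i : m) :
    ∑ j, A i j * (hA.eigenvectorUnitary : Matrix m m ℝ) j k
      = hA.eigenvalues k * (hA.eigenvectorUnitary : Matrix m m ℝ) i k := by
  have h2 := congrFun (congrFun (mulU_eq hA) i) k
  simp only [Matrix.mul_apply] at h2
  rw [h2]
  simp [Matrix.diagonal_apply, mul_ite, mul_zero, Finset.sum_ite_eq',
    RCLike.ofReal_real_eq_id, mul_comm]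
end Spectral1

section Spectral2
variable {m : Type*} [Fintype m] {A : Matrix m m ℝ}

lemma entry_decomp (hA : A.IsHermitian) (i j : m) :
    A i j = ∑ k, hA.eigenvalues k *
      ((hA.eigenvectorUnitary : Matrix m m ℝ) i k * (hA.eigenvectorUnitary : Matrix m m ℝ) j k) := by
  have h := congrFun (congrFun (spectral_theorem_old hA) i) j
  rw [h]
  simp only [Matrix.mul_apply, Matrix.star_apply, Matrix.diagonal_apply, star_trivial,
    mul_ite, mul_zero, ite_mul, zero_mul, Finset.sum_ite_eq, Finset.mem_univ, if_true]
  exact Finset.sum_congr rfl fun k _ => by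
    simp [RCLike.ofReal_real_eq_id]; ring

lemma quad_form (u v z : m → ℝ) (hform : ∀ i j, A i j = u i * u j - v i * v j) :
    ∑ i, ∑ j, z i * A i j * z j = (∑ i, u i * z i)^2 - (∑ i, v i * z i)^2 := by
  have h1 : ∀ i j, z i * A i j * z j
      = (u i * z i) * (u j * z j) - (v i * z i) * (v j * z j) := by
    intro i j; rw [hform]; ring
  simp only [h1, Finset.sum_sub_distrib, ← Finset.mul_sum, ← Finset.sum_mul, sq]

lemma quad_eval (hA : A.IsHermitian) (p q : m) (hpq : p ≠ q) (c₁ c₂ : ℝ) :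
    ∑ i, ∑ j, (c₁ * (hA.eigenvectorUnitary : Matrix m m ℝ) i p
        + c₂ * (hA.eigenvectorUnitary : Matrix m m ℝ) i q) * A i j
        * (c₁ * (hA.eigenvectorUnitary : Matrix m m ℝ) j p
          + c₂ * (hA.eigenvectorUnitary : Matrix m m ℝ) j q)
      = c₁^2 * hA.eigenvalues p + c₂^2 * hA.eigenvalues q := by
  have hz : ∀ i, ∑ j, A i j * (c₁ * (hA.eigenvectorUnitary : Matrix m m ℝ) j p
      + c₂ * (hA.eigenvectorUnitary : Matrix m m ℝ) j q)
      = c₁ * (hA.eigenvalues p * (hA.eigenvectorUnitary : Matrix m m ℝ) i p)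
        + c₂ * (hA.eigenvalues q * (hA.eigenvectorUnitary : Matrix m m ℝ) i q) := by
    intro i
    have hh : ∀ j, A i j * (c₁ * (hA.eigenvectorUnitary : Matrix m m ℝ) j p
        + c₂ * (hA.eigenvectorUnitary : Matrix m m ℝ) j q)
        = c₁ * (A i j * (hA.eigenvectorUnitary : Matrix m m ℝ) j p)
          + c₂ * (A i j * (hA.eigenvectorUnitary : Matrix m m ℝ) j q) := fun j => by ring
    simp only [hh, Finset.sum_add_distrib, ← Finset.mul_sum, eigencol hA]
  have hsummand : ∀ i, ∑ j, (c₁ * (hA.eigenvectorUnitary : Matrix m m ℝ) i p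
        + c₂ * (hA.eigenvectorUnitary : Matrix m m ℝ) i q) * A i j
        * (c₁ * (hA.eigenvectorUnitary : Matrix m m ℝ) j p
          + c₂ * (hA.eigenvectorUnitary : Matrix m m ℝ) j q)
      = (c₁^2 * hA.eigenvalues p)
          * ((hA.eigenvectorUnitary : Matrix m m ℝ) i p * (hA.eigenvectorUnitary : Matrix m m ℝ) i p)
        + (c₁*c₂* hA.eigenvalues q)
          * ((hA.eigenvectorUnitary : Matrix m m ℝ) i p * (hA.eigenvectorUnitary : Matrix m m ℝ) i q)
        + (c₁*c₂* hA.eigenvalues p)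
          * ((hA.eigenvectorUnitary : Matrix m m ℝ) i q * (hA.eigenvectorUnitary : Matrix m m ℝ) i p)
        + (c₂^2 * hA.eigenvalues q)
          * ((hA.eigenvectorUnitary : Matrix m m ℝ) i q * (hA.eigenvectorUnitary : Matrix m m ℝ) i q) := by
    intro i
    have e1 : ∀ j, (c₁ * (hA.eigenvectorUnitary : Matrix m m ℝ) i p
        + c₂ * (hA.eigenvectorUnitary : Matrix m m ℝ) i q) * A i j
        * (c₁ * (hA.eigenvectorUnitary : Matrix m m ℝ) j p
          + c₂ * (hA.eigenvectorUnitary : Matrix m m ℝ) j q)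
        = (c₁ * (hA.eigenvectorUnitary : Matrix m m ℝ) i p
        + c₂ * (hA.eigenvectorUnitary : Matrix m m ℝ) i q)
          * (A i j * (c₁ * (hA.eigenvectorUnitary : Matrix m m ℝ) j p
          + c₂ * (hA.eigenvectorUnitary : Matrix m m ℝ) j q)) := fun j => by ring
    simp only [e1, ← Finset.mul_sum, hz i]
    ring
  simp only [hsummand, Finset.sum_add_distrib, ← Finset.mul_sum, col_dot hA]
  simp [hpq, hpq.symm]

lemma no_two_pos (hA : A.IsHermitian) (u v : m → ℝ)
    (hform : ∀ i j, A i j = u i * u j - v i * v j)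
    {p q : m} (hpq : p ≠ q) (hp : 0 < hA.eigenvalues p) (hq : 0 < hA.eigenvalues q) :
    False := by
  obtain ⟨c₁, c₂, hc, hu0⟩ : ∃ c₁ c₂ : ℝ, ¬(c₁ = 0 ∧ c₂ = 0) ∧
      c₁ * (∑ i, u i * (hA.eigenvectorUnitary : Matrix m m ℝ) i p)
        + c₂ * (∑ i, u i * (hA.eigenvectorUnitary : Matrix m m ℝ) i q) = 0 := by
    by_cases h : (∑ i, u i * (hA.eigenvectorUnitary : Matrix m m ℝ) i p) = 0 ∧
        (∑ i, u i * (hA.eigenvectorUnitary : Matrix m m ℝ) i q) = 0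
    · exact ⟨1, 0, by simp, by rw [one_mul, zero_mul, add_zero]; exact h.1⟩
    · refine ⟨∑ i, u i * (hA.eigenvectorUnitary : Matrix m m ℝ) i q,
        -(∑ i, u i * (hA.eigenvectorUnitary : Matrix m m ℝ) i p), ?_, by ring⟩
      intro hcon
      exact h ⟨by simpa using hcon.2, hcon.1⟩
  set z : m → ℝ := fun i => c₁ * (hA.eigenvectorUnitary : Matrix m m ℝ) i p
      + c₂ * (hA.eigenvectorUnitary : Matrix m m ℝ) i q with hzdef
  have hQ1 : ∑ i, ∑ j, z i * A i j * z j = c₁^2 * hA.eigenvalues p + c₂^2 * hA.eigenvalues q :=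
    quad_eval hA p q hpq c₁ c₂
  have hQ2 : ∑ i, ∑ j, z i * A i j * z j = (∑ i, u i * z i)^2 - (∑ i, v i * z i)^2 :=
    quad_form u v z hform
  have huz : ∑ i, u i * z i = 0 := by
    have hh : ∀ i, u i * z i = c₁ * (u i * (hA.eigenvectorUnitary : Matrix m m ℝ) i p)
        + c₂ * (u i * (hA.eigenvectorUnitary : Matrix m m ℝ) i q) := by
      intro i; simp only [hzdef]; ring
    simp only [hh, Finset.sum_add_distrib, ← Finset.mul_sum]
    exact hu0
  have hneg : ∑ i, ∑ j, z i * A i j * z j ≤ 0 := by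
    rw [hQ2, huz]
    simp [sq_nonneg]
  have hpos : 0 < c₁^2 * hA.eigenvalues p + c₂^2 * hA.eigenvalues q := by
    rcases not_and_or.mp hc with h1 | h1
    · have : 0 < c₁^2 := by positivity
      nlinarith [sq_nonneg c₂]
    · have : 0 < c₂^2 := by positivity
      nlinarith [sq_nonneg c₁]
  linarith [hQ1 ▸ hneg]

lemma no_two_neg (hA : A.IsHermitian) (u v : m → ℝ)
    (hform : ∀ i j, A i j = u i * u j - v i * v j)
    {p q : m} (hpq : p ≠ q) (hp : hA.eigenvalues p < 0) (hq : hA.eigenvalues q < 0) :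
    False := by
  obtain ⟨c₁, c₂, hc, hv0⟩ : ∃ c₁ c₂ : ℝ, ¬(c₁ = 0 ∧ c₂ = 0) ∧
      c₁ * (∑ i, v i * (hA.eigenvectorUnitary : Matrix m m ℝ) i p)
        + c₂ * (∑ i, v i * (hA.eigenvectorUnitary : Matrix m m ℝ) i q) = 0 := by
    by_cases h : (∑ i, v i * (hA.eigenvectorUnitary : Matrix m m ℝ) i p) = 0 ∧
        (∑ i, v i * (hA.eigenvectorUnitary : Matrix m m ℝ) i q) = 0
    · exact ⟨1, 0, by simp, by rw [one_mul, zero_mul, add_zero]; exact h.1⟩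
    · refine ⟨∑ i, v i * (hA.eigenvectorUnitary : Matrix m m ℝ) i q,
        -(∑ i, v i * (hA.eigenvectorUnitary : Matrix m m ℝ) i p), ?_, by ring⟩
      intro hcon
      exact h ⟨by simpa using hcon.2, hcon.1⟩
  set z : m → ℝ := fun i => c₁ * (hA.eigenvectorUnitary : Matrix m m ℝ) i p
      + c₂ * (hA.eigenvectorUnitary : Matrix m m ℝ) i q with hzdef
  have hQ1 : ∑ i, ∑ j, z i * A i j * z j = c₁^2 * hA.eigenvalues p + c₂^2 * hA.eigenvalues q :=
    quad_eval hA p q hpq c₁ c₂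
  have hQ2 : ∑ i, ∑ j, z i * A i j * z j = (∑ i, u i * z i)^2 - (∑ i, v i * z i)^2 :=
    quad_form u v z hform
  have hvz : ∑ i, v i * z i = 0 := by
    have hh : ∀ i, v i * z i = c₁ * (v i * (hA.eigenvectorUnitary : Matrix m m ℝ) i p)
        + c₂ * (v i * (hA.eigenvectorUnitary : Matrix m m ℝ) i q) := by
      intro i; simp only [hzdef]; ring
    simp only [hh, Finset.sum_add_distrib, ← Finset.mul_sum]
    exact hv0
  have hnonneg : 0 ≤ ∑ i, ∑ j, z i * A i j * z j := by
    rw [hQ2, hvz]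
    simp [sq_nonneg]
  have hneg : c₁^2 * hA.eigenvalues p + c₂^2 * hA.eigenvalues q < 0 := by
    rcases not_and_or.mp hc with h1 | h1
    · have : 0 < c₁^2 := by positivity
      nlinarith [sq_nonneg c₂]
    · have : 0 < c₂^2 := by positivity
      nlinarith [sq_nonneg c₁]
  linarith [hQ1 ▸ hnonneg]

end Spectral2

section MulSelf
variable {m : Type*} [Fintype m] {A : Matrix m m ℝ}

lemma mul_self_decomp (hA : A.IsHermitian) :
    A * A = (hA.eigenvectorUnitary : Matrix m m ℝ) *
      (Matrix.diagonal (RCLike.ofReal ∘ hA.eigenvalues) *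
        Matrix.diagonal (RCLike.ofReal ∘ hA.eigenvalues)) *
      star (hA.eigenvectorUnitary : Matrix m m ℝ) := by
  have h1 : star (hA.eigenvectorUnitary : Matrix m m ℝ) * (hA.eigenvectorUnitary : Matrix m m ℝ)
      = 1 := Matrix.mem_unitaryGroup_iff'.mp hA.eigenvectorUnitary.2
  conv_lhs => rw [spectral_theorem_old hA]
  simp only [Matrix.mul_assoc]
  rw [← Matrix.mul_assoc (star (hA.eigenvectorUnitary : Matrix m m ℝ))
    (hA.eigenvectorUnitary : Matrix m m ℝ), h1, Matrix.one_mul]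

lemma mul_self_eq_smul_one (hA : A.IsHermitian) (c : ℝ)
    (h : ∀ k, hA.eigenvalues k ^ 2 = c) : A * A = c • 1 := by
  rw [mul_self_decomp hA, Matrix.diagonal_mul_diagonal]
  have hfun : (fun i => (RCLike.ofReal ∘ hA.eigenvalues) i * (RCLike.ofReal ∘ hA.eigenvalues) i)
      = fun _ : m => c := by
    funext i
    simp only [Function.comp_apply, RCLike.ofReal_real_eq_id, id_eq]
    rw [← h i, sq]
  have hd : (Matrix.diagonal fun i => (RCLike.ofReal ∘ hA.eigenvalues) i
      * (RCLike.ofReal ∘ hA.eigenvalues) i) = c • (1 : Matrix m m ℝ) := by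
    rw [hfun, Matrix.smul_one_eq_diagonal]
  rw [hd]
  rw [Matrix.mul_smul, Matrix.smul_mul, Matrix.mul_one]
  rw [Matrix.mem_unitaryGroup_iff.mp hA.eigenvectorUnitary.2]

lemma eig_sq_of_mul_self (hA : A.IsHermitian) (c : ℝ)
    (h : ∀ i j, (A * A) i j = if i = j then c else 0) (k : m) :
    hA.eigenvalues k ^ 2 = c := by
  have h1 : ∑ i, (hA.eigenvectorUnitary : Matrix m m ℝ) i k
      * (hA.eigenvectorUnitary : Matrix m m ℝ) i k = 1 := by
    simpa using col_dot hA k k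
  have h2 : ∃ i, (hA.eigenvectorUnitary : Matrix m m ℝ) i k ≠ 0 := by
    by_contra hcon
    push_neg at hcon
    rw [Finset.sum_eq_zero (fun i _ => by rw [hcon i]; ring)] at h1
    norm_num at h1
  obtain ⟨i, hi⟩ := h2
  have h3 : ∑ j, (A * A) i j * (hA.eigenvectorUnitary : Matrix m m ℝ) j k
      = hA.eigenvalues k ^ 2 * (hA.eigenvectorUnitary : Matrix m m ℝ) i k := by
    simp only [Matrix.mul_apply, Finset.sum_mul]
    rw [Finset.sum_comm]
    have hh : ∀ l, ∑ j, A i l * A l j * (hA.eigenvectorUnitary : Matrix m m ℝ) j k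
        = A i l * (hA.eigenvalues k * (hA.eigenvectorUnitary : Matrix m m ℝ) l k) := by
      intro l
      rw [← eigencol hA, Finset.mul_sum]
      exact Finset.sum_congr rfl fun j _ => by ring
    simp only [hh]
    have hh2 : ∀ l, A i l * (hA.eigenvalues k * (hA.eigenvectorUnitary : Matrix m m ℝ) l k)
        = hA.eigenvalues k * (A i l * (hA.eigenvectorUnitary : Matrix m m ℝ) l k) := by
      intro l; ring
    simp only [hh2, ← Finset.mul_sum, eigencol hA]
    ring
  have h4 : ∑ j, (A * A) i j * (hA.eigenvectorUnitary : Matrix m m ℝ) j k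
      = c * (hA.eigenvectorUnitary : Matrix m m ℝ) i k := by
    simp only [h, ite_mul, zero_mul]
    rw [Finset.sum_ite_eq]
    simp
  exact mul_right_cancel₀ hi (h3.symm.trans h4)

lemma mul_self_entry (hA : A.IsHermitian) (c : ℝ)
    (h : ∀ k, hA.eigenvalues k ^ 2 = c) (i j : m) :
    (A * A) i j = if i = j then c else 0 := by
  rw [mul_self_eq_smul_one hA c h]
  simp [Matrix.one_apply, mul_ite]

end MulSelf

section GraphLevel
variable {V : Type*} [Fintype V] (G : SimpleGraph V)

lemma forgotten_nonneg : 0 ≤ forgottenIndex G :=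
  Finset.sum_nonneg fun i _ => by positivity

lemma energy_nonneg : 0 ≤ somborEnergy G :=
  Finset.sum_nonneg fun i _ => abs_nonneg _

lemma max_pos_iff' (x : ℝ) : 0 < max x 0 ↔ 0 < x := by
  constructor
  · intro h
    by_contra hx
    push_neg at hx
    rw [max_eq_right hx] at h
    exact lt_irrefl _ h
  · intro h; exact lt_max_of_lt_left h

lemma key_fg :
    (∑ i, max (somborEigs G i) 0) = (∑ i, max (-(somborEigs G i)) 0) ∧
    somborEnergy G = 2 * ∑ i, max (somborEigs G i) 0 ∧
    (∑ i, (max (somborEigs G i) 0)^2) + (∑ i, (max (-(somborEigs G i)) 0)^2)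
      = 2 * forgottenIndex G := by
  have habs : ∀ x : ℝ, max x 0 + max (-x) 0 = |x| := by
    intro x
    rcases le_total 0 x with h | h
    · rw [max_eq_left h, max_eq_right (neg_nonpos.2 h), add_zero, abs_of_nonneg h]
    · rw [max_eq_right h, max_eq_left (neg_nonneg.2 h), zero_add, abs_of_nonpos h]
  have hsq : ∀ x : ℝ, (max x 0)^2 + (max (-x) 0)^2 = x^2 := by
    intro x
    rcases le_total 0 x with h | h
    · rw [max_eq_left h, max_eq_right (neg_nonpos.2 h)]; ring
    · rw [max_eq_right h, max_eq_left (neg_nonneg.2 h)]; ring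
  refine ⟨?_, ?_, ?_⟩
  · have h1 : ∑ i, (max (somborEigs G i) 0 - max (-(somborEigs G i)) 0) = 0 := by
      have : ∀ i, max (somborEigs G i) 0 - max (-(somborEigs G i)) 0 = somborEigs G i :=
        fun i => max_zero_sub_max_neg_zero_eq_self _
      rw [Finset.sum_congr rfl fun i _ => this i]
      exact sum_somborEigs G
    rw [Finset.sum_sub_distrib] at h1
    linarith
  · unfold somborEnergy
    have h2 : ∀ i, |somborEigs G i| = max (somborEigs G i) 0 + max (-(somborEigs G i)) 0 :=
      fun i => (habs _).symm
    rw [Finset.sum_congr rfl fun i _ => h2 i, Finset.sum_add_distrib]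
    have h1 : ∑ i, (max (somborEigs G i) 0 - max (-(somborEigs G i)) 0) = 0 := by
      have : ∀ i, max (somborEigs G i) 0 - max (-(somborEigs G i)) 0 = somborEigs G i :=
        fun i => max_zero_sub_max_neg_zero_eq_self _
      rw [Finset.sum_congr rfl fun i _ => this i]
      exact sum_somborEigs G
    rw [Finset.sum_sub_distrib] at h1
    linarith
  · rw [← Finset.sum_add_distrib]
    rw [Finset.sum_congr rfl fun i _ => hsq (somborEigs G i)]
    exact sum_sq_somborEigs G

lemma energy_lower : 2 * Real.sqrt (forgottenIndex G) ≤ somborEnergy G := by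
  obtain ⟨hPQ, hE, h2F⟩ := key_fg G
  set P := ∑ i, max (somborEigs G i) 0 with hP
  have hPnn : 0 ≤ P := Finset.sum_nonneg fun i _ => le_max_right _ _
  have hle1 : ∑ i, (max (somborEigs G i) 0)^2 ≤ P^2 :=
    sum_sq_le_sq_sum _ fun i => le_max_right _ _
  have hle2 : ∑ i, (max (-(somborEigs G i)) 0)^2 ≤ P^2 := by
    rw [hPQ]
    exact sum_sq_le_sq_sum _ fun i => le_max_right _ _
  have hFP : forgottenIndex G ≤ P^2 := by linarith
  have : Real.sqrt (forgottenIndex G) ≤ P := by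
    calc Real.sqrt (forgottenIndex G) ≤ Real.sqrt (P^2) := Real.sqrt_le_sqrt hFP
    _ = P := Real.sqrt_sq hPnn
  linarith [hE]

lemma energy_eq_of_few
    (h1 : ∀ p q, p ≠ q → 0 < somborEigs G p → 0 < somborEigs G q → False)
    (h2 : ∀ p q, p ≠ q → somborEigs G p < 0 → somborEigs G q < 0 → False) :
    somborEnergy G = 2 * Real.sqrt (forgottenIndex G) := by
  obtain ⟨hPQ, hE, h2F⟩ := key_fg G
  set P := ∑ i, max (somborEigs G i) 0 with hP
  have hPnn : 0 ≤ P := Finset.sum_nonneg fun i _ => le_max_right _ _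
  have heq1 : ∑ i, (max (somborEigs G i) 0)^2 = P^2 := by
    apply sum_sq_eq_sq_sum _ (fun i => le_max_right _ _)
    intro p q hpq hp hq
    exact h1 p q hpq ((max_pos_iff' _).1 hp) ((max_pos_iff' _).1 hq)
  have heq2 : ∑ i, (max (-(somborEigs G i)) 0)^2 = P^2 := by
    rw [hPQ]
    apply sum_sq_eq_sq_sum _ (fun i => le_max_right _ _)
    intro p q hpq hp hq
    have hp' : somborEigs G p < 0 := by
      have := (max_pos_iff' _).1 hp; linarith
    have hq' : somborEigs G q < 0 := by
      have := (max_pos_iff' _).1 hq; linarith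
    exact h2 p q hpq hp' hq'
  have hFP : forgottenIndex G = P^2 := by linarith
  rw [hE, hFP, Real.sqrt_sq hPnn]

end GraphLevel


noncomputable def somborU {V : Type*} [Fintype V] (G : SimpleGraph V) : Matrix V V ℝ :=
  ((somborMatrix_isHermitian G).eigenvectorUnitary : Matrix V V ℝ)

lemma sombor_entry_decomp {V : Type*} [Fintype V] (G : SimpleGraph V) (i j : V) :
    somborMatrix G i j = ∑ k, somborEigs G k * (somborU G i k * somborU G j k) :=
  entry_decomp (somborMatrix_isHermitian G) i j

lemma sombor_no_two_pos {V : Type*} [Fintype V] (G : SimpleGraph V) (u v : V → ℝ)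
    (hform : ∀ i j, somborMatrix G i j = u i * u j - v i * v j)
    {p q : V} (hpq : p ≠ q) (hp : 0 < somborEigs G p) (hq : 0 < somborEigs G q) : False :=
  no_two_pos (somborMatrix_isHermitian G) u v hform hpq hp hq

lemma sombor_no_two_neg {V : Type*} [Fintype V] (G : SimpleGraph V) (u v : V → ℝ)
    (hform : ∀ i j, somborMatrix G i j = u i * u j - v i * v j)
    {p q : V} (hpq : p ≠ q) (hp : somborEigs G p < 0) (hq : somborEigs G q < 0) : False :=
  no_two_neg (somborMatrix_isHermitian G) u v hform hpq hp hq

lemma degree_bot' {V : Type*} [Fintype V] (v : V)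
    [inst : Fintype ((⊥ : SimpleGraph V).neighborSet v)] :
    (⊥ : SimpleGraph V).degree v = 0 := by
  rw [SimpleGraph.degree, Finset.card_eq_zero]
  ext x
  simp [SimpleGraph.mem_neighborFinset]

theorem stmt11 {n : ℕ} (hn : 3 ≤ n) (G : SimpleGraph (Fin n)) :
    (2 * Real.sqrt (forgottenIndex G) ≤ somborEnergy G ∧
      somborEnergy G ≤ Real.sqrt (2 * n * forgottenIndex G)) ∧
    (somborEnergy G = Real.sqrt (2 * n * forgottenIndex G) ↔
      G = ⊥ ∨ ∀ v, G.degree v = 1) ∧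
    (G.Connected →
      (2 * Real.sqrt (forgottenIndex G) = somborEnergy G ↔
        ∃ A : Finset (Fin n), ∀ i j,
          G.Adj i j ↔ ((i ∈ A ∧ j ∉ A) ∨ (i ∉ A ∧ j ∈ A)))) := by
  have hF0 := forgotten_nonneg G
  have hE0 := energy_nonneg G
  have hcard : Fintype.card (Fin n) = n := Fintype.card_fin n
  have hEdef : somborEnergy G = ∑ i, |somborEigs G i| := rfl
  have habs2 : ∑ i, |somborEigs G i|^2 = 2 * forgottenIndex G := by
    rw [Finset.sum_congr rfl (fun i _ => sq_abs _)]
    exact sum_sq_somborEigs G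
  have hcs := sq_sum_le_card_mul (fun i => |somborEigs G i|)
  rw [hcard] at hcs
  rw [habs2] at hcs
  have hupper : somborEnergy G ≤ Real.sqrt (2 * n * forgottenIndex G) := by
    rw [← Real.sqrt_sq hE0]
    apply Real.sqrt_le_sqrt
    rw [hEdef]
    calc (∑ i, |somborEigs G i|)^2 ≤ (n:ℝ) * (2*forgottenIndex G) := hcs
    _ = 2*n*forgottenIndex G := by ring
  refine ⟨⟨energy_lower G, hupper⟩, ?_, ?_⟩
  · constructor
    · intro hEq
      have hsq2 : (somborEnergy G)^2 = 2*n*forgottenIndex G := by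
        rw [hEq, Real.sq_sqrt (by positivity)]
      have hall : ∀ i j, |somborEigs G i| = |somborEigs G j| := by
        apply all_eq_of_sq_sum_eq (fun i => |somborEigs G i|)
        rw [hcard, habs2, ← hEdef, hsq2]
        ring
      set i0 : Fin n := ⟨0, by omega⟩ with hi0
      set c : ℝ := |somborEigs G i0| with hc
      have hrsq : ∀ k, somborEigs G k ^ 2 = c^2 := by
        intro k; rw [← sq_abs, hall k i0]
      have hSS := mul_self_entry (somborMatrix_isHermitian G) (c^2) hrsq
      by_cases hbot : G = ⊥
      · exact Or.inl hbot
      right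
      have hedge : ∃ v w, G.Adj v w := by
        by_contra hcon
        push_neg at hcon
        apply hbot
        ext v w
        simp only [SimpleGraph.bot_adj, iff_false]
        exact hcon v w
      obtain ⟨v, w, hvw⟩ := hedge
      have hdiag : ∀ u, (somborMatrix G * somborMatrix G) u u
          = ∑ j, (somborMatrix G u j)^2 := by
        intro u
        rw [Matrix.mul_apply]
        exact Finset.sum_congr rfl fun j _ => by rw [sombor_symm, sq]
      have hc2pos : 0 < c^2 := by
        have h1 : (somborMatrix G * somborMatrix G) v v = c^2 := (hSS v v).trans (if_pos rfl)
        rw [hdiag v] at h1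
        have h2 : (somborMatrix G v w)^2 ≤ ∑ j, (somborMatrix G v j)^2 :=
          Finset.single_le_sum (f := fun j => (somborMatrix G v j)^2)
            (fun j _ => sq_nonneg _) (Finset.mem_univ w)
        have h3 : 0 < (somborMatrix G v w)^2 := pow_pos (sombor_pos_of_adj G hvw) 2
        linarith
      intro u
      have hnb : ∃ x, G.Adj u x := by
        by_contra hcon
        push_neg at hcon
        have h1 : (somborMatrix G * somborMatrix G) u u = c^2 := (hSS u u).trans (if_pos rfl)
        rw [hdiag u] at h1
        have h2 : ∀ j, somborMatrix G u j = 0 := fun j => by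
          by_contra hne; exact hcon j ((sombor_ne_zero_iff G u j).1 hne)
        rw [Finset.sum_eq_zero (fun j _ => by rw [h2 j]; ring)] at h1
        linarith
      obtain ⟨x0, hx0⟩ := hnb
      have huniq : ∀ a b, G.Adj u a → G.Adj u b → a = b := by
        intro a b ha hb
        by_contra hab
        have h1 : (somborMatrix G * somborMatrix G) a b = 0 := (hSS a b).trans (if_neg hab)
        have h2 : (somborMatrix G a u) * (somborMatrix G u b) ≤
            ∑ m1, somborMatrix G a m1 * somborMatrix G m1 b :=
          Finset.single_le_sum (f := fun m1 => somborMatrix G a m1 * somborMatrix G m1 b)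
            (fun m1 _ => mul_nonneg (sombor_nonneg G _ _) (sombor_nonneg G _ _))
            (Finset.mem_univ u)
        have h3 : 0 < somborMatrix G a u * somborMatrix G u b :=
          mul_pos (sombor_pos_of_adj G ha.symm) (sombor_pos_of_adj G hb)
        rw [Matrix.mul_apply] at h1
        linarith
      have hnf : G.neighborFinset u = {x0} := by
        ext y
        simp only [SimpleGraph.mem_neighborFinset, Finset.mem_singleton]
        exact ⟨fun hy => huniq y x0 hy hx0, fun hy => hy ▸ hx0⟩
      rw [SimpleGraph.degree, hnf, Finset.card_singleton]
    · intro h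
      rcases h with hbot | hdeg
      · subst hbot
        have hFbot : forgottenIndex (⊥ : SimpleGraph (Fin n)) = 0 := by
          unfold forgottenIndex
          simp [degree_bot']
        have hzero : ∀ i, somborEigs (⊥ : SimpleGraph (Fin n)) i = 0 := by
          have h1 := sum_sq_somborEigs (⊥ : SimpleGraph (Fin n))
          rw [hFbot, mul_zero] at h1
          intro i
          have h2 := (Finset.sum_eq_zero_iff_of_nonneg (fun j _ => sq_nonneg _)).1 h1 i
            (Finset.mem_univ i)
          exact sq_eq_zero_iff.1 h2
        rw [hEdef, Finset.sum_eq_zero (fun i _ => by rw [hzero i, abs_zero]), hFbot]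
        norm_num
      · have hSS : ∀ i k, (somborMatrix G * somborMatrix G) i k
            = @ite ℝ (i = k) (Classical.propDecidable _) (2:ℝ) 0 := by
          intro i k
          rw [Matrix.mul_apply]
          by_cases hik : i = k
          · subst hik
            rw [if_pos rfl]
            have h1 : ∀ j, somborMatrix G i j * somborMatrix G j i
                = (if G.Adj i j then (2:ℝ) else 0) := by
              intro j
              by_cases hadj : G.Adj i j
              · rw [if_pos hadj]
                have h2 := sombor_sq G i j
                rw [if_pos hadj, hdeg i, hdeg j] at h2
                rw [sombor_symm G i j, ← sq, h2]
                norm_num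
              · rw [if_neg hadj]
                have hz : somborMatrix G i j = 0 := by simp [somborMatrix, hadj]
                rw [hz, zero_mul]
            rw [Finset.sum_congr rfl fun j _ => h1 j, sum_ite_adj G i 2, hdeg i]
            norm_num
          · have h1 : ∀ j, somborMatrix G i j * somborMatrix G j k = 0 := by
              intro j
              by_cases hij : G.Adj i j
              · by_cases hjk : G.Adj j k
                · exfalso
                  have hi' : i ∈ G.neighborFinset j := by
                    rw [SimpleGraph.mem_neighborFinset]; exact hij.symm
                  have hk' : k ∈ G.neighborFinset j := by
                    rw [SimpleGraph.mem_neighborFinset]; exact hjk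
                  have hle : (G.neighborFinset j).card ≤ 1 := by
                    rw [← SimpleGraph.degree, hdeg j]
                  exact hik (Finset.card_le_one.1 hle i hi' k hk')
                · have hz : somborMatrix G j k = 0 := by
                    by_contra hne; exact hjk ((sombor_ne_zero_iff G j k).1 hne)
                  rw [hz, mul_zero]
              · have hz : somborMatrix G i j = 0 := by
                  by_contra hne; exact hij ((sombor_ne_zero_iff G i j).1 hne)
                rw [hz, zero_mul]
            rw [Finset.sum_eq_zero fun j _ => h1 j, if_neg hik]
        have hr2 : ∀ k, somborEigs G k ^ 2 = 2 := fun k =>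
          eig_sq_of_mul_self (somborMatrix_isHermitian G) 2 hSS k
        have habsr : ∀ k, |somborEigs G k| = Real.sqrt 2 := by
          intro k
          rw [← Real.sqrt_sq_eq_abs, hr2 k]
        have hFn : forgottenIndex G = n := by
          unfold forgottenIndex
          have hh : ∀ i : Fin n, ((G.degree i : ℝ))^3 = 1 := by
            intro i; rw [hdeg i]; norm_num
          rw [Finset.sum_congr rfl fun i _ => hh i]
          simp [hcard]
        rw [hEdef, Finset.sum_congr rfl fun i _ => habsr i, Finset.sum_const, Finset.card_univ,
          hcard, hFn, nsmul_eq_mul]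
        rw [show (2:ℝ) * n * n = ((n:ℝ) * Real.sqrt 2)^2 by
          rw [mul_pow, Real.sq_sqrt (by norm_num : (0:ℝ) ≤ 2)]; ring]
        rw [Real.sqrt_sq (by positivity)]
  · intro hconn
    have hadj_ex : ∀ v : Fin n, ∃ w, G.Adj v w := by
      intro v
      obtain ⟨u, hu⟩ : ∃ u : Fin n, u ≠ v := by
        by_cases h : v = ⟨0, by omega⟩
        · refine ⟨⟨1, by omega⟩, ?_⟩
          rw [h]
          simp [Fin.ext_iff]
        · exact ⟨⟨0, by omega⟩, fun hc => h hc.symm⟩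
      obtain ⟨p⟩ := hconn.preconnected v u
      cases p with
      | nil => exact absurd rfl hu.symm
      | cons h p => exact ⟨_, h⟩
    have hFpos : 0 < forgottenIndex G := by
      obtain ⟨w, hw⟩ := hadj_ex ⟨0, by omega⟩
      have hdpos : 0 < G.degree (⟨0, by omega⟩ : Fin n) :=
        (G.degree_pos_iff_exists_adj _).2 ⟨w, hw⟩
      have h1 : ((G.degree (⟨0, by omega⟩ : Fin n) : ℝ))^3 ≤ forgottenIndex G :=
        Finset.single_le_sum (f := fun i => ((G.degree i : ℝ))^3)
          (fun i _ => by positivity) (Finset.mem_univ _)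
      have h2 : (0:ℝ) < ((G.degree (⟨0, by omega⟩ : Fin n) : ℝ))^3 := by
        have h3 : (0:ℝ) < (G.degree (⟨0, by omega⟩ : Fin n) : ℝ) := by exact_mod_cast hdpos
        positivity
      linarith
    constructor
    · intro hEq
      obtain ⟨hPQ, hEfg, h2F⟩ := key_fg G
      set P := ∑ i, max (somborEigs G i) 0 with hPdef
      have hPnn : 0 ≤ P := Finset.sum_nonneg fun i _ => le_max_right _ _
      have hsqrtF : Real.sqrt (forgottenIndex G) = P := by linarith
      have hFP : forgottenIndex G = P^2 := by rw [← hsqrtF, Real.sq_sqrt hF0]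
      have hle1 : ∑ i, (max (somborEigs G i) 0)^2 ≤ P^2 :=
        sum_sq_le_sq_sum _ fun i => le_max_right _ _
      have hle2 : ∑ i, (max (-(somborEigs G i)) 0)^2 ≤ P^2 := by
        rw [hPQ]
        exact sum_sq_le_sq_sum _ fun i => le_max_right _ _
      have heq1 : ∑ i, (max (somborEigs G i) 0)^2 = P^2 := le_antisymm hle1 (by linarith)
      have heq2 : ∑ i, (max (-(somborEigs G i)) 0)^2 = P^2 := le_antisymm hle2 (by linarith)
      have hPpos : 0 < P := by
        rw [← hsqrtF]
        exact Real.sqrt_pos.2 hFpos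
      have hp_ex : ∃ p, 0 < max (somborEigs G p) 0 := by
        by_contra hcon
        push_neg at hcon
        have h1 : P ≤ 0 := Finset.sum_nonpos fun i _ => hcon i
        linarith
      obtain ⟨p, hfp⟩ := hp_ex
      have hq_ex : ∃ q, 0 < max (-(somborEigs G q)) 0 := by
        by_contra hcon
        push_neg at hcon
        have h1 : ∑ i, max (-(somborEigs G i)) 0 ≤ 0 := Finset.sum_nonpos fun i _ => hcon i
        rw [← hPQ] at h1
        linarith
      obtain ⟨q, hgq⟩ := hq_ex
      have hρp : 0 < somborEigs G p := (max_pos_iff' _).1 hfp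
      have hρq : somborEigs G q < 0 := by
        have := (max_pos_iff' _).1 hgq
        linarith
      have hpq : p ≠ q := fun h => by rw [h] at hρp; linarith
      have honepos : ∀ x y, x ≠ y → 0 < max (somborEigs G x) 0 →
          0 < max (somborEigs G y) 0 → False := by
        intro x y hxy hx hy
        have heq1' : ∑ i, (max (somborEigs G i) 0)^2 = (∑ i, max (somborEigs G i) 0)^2 := by
          rw [heq1, hPdef]
        exact absurd heq1' (ne_of_lt (sum_sq_lt_sq_sum _ (fun i => le_max_right _ _) hxy hx hy))
      have honeneg : ∀ x y, x ≠ y → 0 < max (-(somborEigs G x)) 0 →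
          0 < max (-(somborEigs G y)) 0 → False := by
        intro x y hxy hx hy
        have heq2' : ∑ i, (max (-(somborEigs G i)) 0)^2
            = (∑ i, max (-(somborEigs G i)) 0)^2 := by
          rw [heq2, hPQ]
        exact absurd heq2' (ne_of_lt (sum_sq_lt_sq_sum _ (fun i => le_max_right _ _) hxy hx hy))
      have hzero : ∀ i, i ≠ p → i ≠ q → somborEigs G i = 0 := by
        intro i hip hiq
        have h1 : ¬ 0 < max (somborEigs G i) 0 := fun hc => honepos i p hip hc hfp
        have h2 : ¬ 0 < max (-(somborEigs G i)) 0 := fun hc => honeneg i q hiq hc hgq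
        have h1' : somborEigs G i ≤ 0 := le_trans (le_max_left _ _) (not_lt.1 h1)
        have h2' : -(somborEigs G i) ≤ 0 := le_trans (le_max_left _ _) (not_lt.1 h2)
        linarith
      have hsub : ({p, q} : Finset (Fin n)) ⊆ Finset.univ := Finset.subset_univ _
      have hsum_pq : somborEigs G p + somborEigs G q = 0 := by
        have hvan : ∀ x ∈ Finset.univ, x ∉ ({p,q} : Finset (Fin n)) → somborEigs G x = 0 := by
          intro x _ hx
          rw [Finset.mem_insert, Finset.mem_singleton] at hx
          push_neg at hx
          exact hzero x hx.1 hx.2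
        have h1 : ∑ x ∈ ({p,q} : Finset (Fin n)), somborEigs G x = 0 := by
          rw [Finset.sum_subset hsub hvan]
          exact sum_somborEigs G
        rwa [Finset.sum_pair hpq] at h1
      have hρqp : somborEigs G q = -somborEigs G p := by linarith
      set U := somborU G with hU
      set a : Fin n → ℝ := fun i => Real.sqrt (somborEigs G p) * U i p with ha
      set b : Fin n → ℝ := fun i => Real.sqrt (somborEigs G p) * U i q with hb
      have hform : ∀ i j, somborMatrix G i j = a i * a j - b i * b j := by
        intro i j
        rw [sombor_entry_decomp G i j, ← hU]
        have hvan2 : ∀ x ∈ Finset.univ, x ∉ ({p,q} : Finset (Fin n)) →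
            somborEigs G x * (U i x * U j x) = 0 := by
          intro x _ hx
          rw [Finset.mem_insert, Finset.mem_singleton] at hx
          push_neg at hx
          rw [hzero x hx.1 hx.2, zero_mul]
        rw [← Finset.sum_subset hsub hvan2, Finset.sum_pair hpq]
        have hss : Real.sqrt (somborEigs G p) * Real.sqrt (somborEigs G p) = somborEigs G p :=
          Real.mul_self_sqrt hρp.le
        simp only [ha, hb]
        rw [hρqp]
        linear_combination (U i q * U j q - U i p * U j p) * hss
      have hSii : ∀ i, somborMatrix G i i = 0 := fun i => by simp [somborMatrix]
      have hbcases : ∀ i, b i = a i ∨ b i = -a i := by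
        intro i
        have h1 : (0:ℝ) = a i * a i - b i * b i := by
          rw [← hSii i]
          exact hform i i
        have h2 : b i ^2 = a i ^2 := by nlinarith [h1]
        exact sq_eq_sq_iff_eq_or_eq_neg.1 h2
      have hane : ∀ i, a i ≠ 0 := by
        intro i hai
        have hbi : b i = 0 := by
          rcases hbcases i with h | h
          · rw [h, hai]
          · rw [h, hai, neg_zero]
        obtain ⟨w, hw⟩ := hadj_ex i
        have hzero' : somborMatrix G i w = 0 := by
          rw [hform i w, hai, hbi]
          ring
        exact ((sombor_ne_zero_iff G i w).2 hw) hzero'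
      have hnot : ∀ x, b x = -a x → ¬ (b x = a x) := by
        intro x hx hc
        apply hane x
        rw [hx] at hc
        linarith
      have hnot2 : ∀ x, b x = a x → ¬ (b x = -a x) := by
        intro x hx hc
        apply hane x
        rw [hx] at hc
        linarith
      refine ⟨Finset.univ.filter (fun i => b i = a i), ?_⟩
      intro i j
      have hmem : ∀ x, x ∈ Finset.univ.filter (fun i => b i = a i) ↔ b x = a x := by
        intro x
        simp
      rw [← sombor_ne_zero_iff G i j, hmem i, hmem j]
      rcases hbcases i with hi | hi <;> rcases hbcases j with hj | hj
      · have hS0 : somborMatrix G i j = 0 := by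
          rw [hform i j, hi, hj]
          ring
        constructor
        · intro hne
          exact absurd hS0 hne
        · rintro (⟨_, h2⟩ | ⟨h1, _⟩)
          · exact absurd hj h2
          · exact absurd hi h1
      · have hne : somborMatrix G i j ≠ 0 := by
          rw [hform i j, hi, hj]
          have he : a i * a j - a i * -(a j) = 2 * (a i * a j) := by ring
          rw [he]
          exact mul_ne_zero two_ne_zero (mul_ne_zero (hane i) (hane j))
        exact ⟨fun _ => Or.inl ⟨hi, hnot j hj⟩, fun _ => hne⟩
      · have hne : somborMatrix G i j ≠ 0 := by
          rw [hform i j, hi, hj]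
          have he : a i * a j - -a i * a j = 2 * (a i * a j) := by ring
          rw [he]
          exact mul_ne_zero two_ne_zero (mul_ne_zero (hane i) (hane j))
        exact ⟨fun _ => Or.inr ⟨hnot i hi, hj⟩, fun _ => hne⟩
      · have hS0 : somborMatrix G i j = 0 := by
          rw [hform i j, hi, hj]
          ring
        constructor
        · intro hne
          exact absurd hS0 hne
        · rintro (⟨h1, _⟩ | ⟨_, h2⟩)
          · exact absurd h1 (hnot i hi)
          · exact absurd h2 (hnot j hj)
    · intro hA
      obtain ⟨A, hAdj⟩ := hA
      have hdegA : ∀ i ∈ A, G.neighborFinset i = Aᶜ := by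
        intro i hi
        ext x
        rw [SimpleGraph.mem_neighborFinset, Finset.mem_compl, hAdj i x]
        constructor
        · rintro (⟨_, hx⟩ | ⟨hni, _⟩)
          · exact hx
          · exact absurd hi hni
        · intro hx
          exact Or.inl ⟨hi, hx⟩
      have hdegB : ∀ i ∉ A, G.neighborFinset i = A := by
        intro i hi
        ext x
        rw [SimpleGraph.mem_neighborFinset, hAdj i x]
        constructor
        · rintro (⟨hiA, _⟩ | ⟨_, hx⟩)
          · exact absurd hiA hi
          · exact hx
        · intro hx
          exact Or.inr ⟨hi, hx⟩
      set s := A.card with hs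
      have hdA : ∀ i ∈ A, G.degree i = n - s := by
        intro i hi
        rw [SimpleGraph.degree, hdegA i hi, Finset.card_compl, hcard]
      have hdB : ∀ i ∉ A, G.degree i = s := by
        intro i hi
        rw [SimpleGraph.degree, hdegB i hi]
      set w : ℝ := Real.sqrt (((n - s : ℕ) : ℝ)^2 + (s:ℝ)^2) with hw
      have hwnn : 0 ≤ w := Real.sqrt_nonneg _
      set c : ℝ := Real.sqrt (w/2) with hc
      have hc2 : c * c = w / 2 := Real.mul_self_sqrt (by positivity)
      set u : Fin n → ℝ := fun _ => c with hu
      set v : Fin n → ℝ := fun i => if i ∈ A then c else -c with hv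
      have hform : ∀ i j, somborMatrix G i j = u i * u j - v i * v j := by
        intro i j
        by_cases hi : i ∈ A <;> by_cases hj : j ∈ A
        · have hnadj : ¬ G.Adj i j := by
            rw [hAdj i j]
            rintro (⟨_, h⟩ | ⟨h, _⟩)
            exacts [h hj, h hi]
          simp only [somborMatrix, if_neg hnadj, hu, hv, if_pos hi, if_pos hj]
          ring
        · have hadj : G.Adj i j := (hAdj i j).2 (Or.inl ⟨hi, hj⟩)
          have hSw : somborMatrix G i j = w := by
            simp only [somborMatrix, if_pos hadj]
            rw [hw, hdA i hi, hdB j hj]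
          rw [hSw]
          simp only [hu, hv, if_pos hi, if_neg hj]
          have he : c * c - c * -c = 2 * (c * c) := by ring
          rw [he, hc2]
          ring
        · have hadj : G.Adj i j := (hAdj i j).2 (Or.inr ⟨hi, hj⟩)
          have hSw : somborMatrix G i j = w := by
            simp only [somborMatrix, if_pos hadj]
            rw [hw, hdB i hi, hdA j hj, add_comm (((s:ℕ) : ℝ)^2)]
          rw [hSw]
          simp only [hu, hv, if_neg hi, if_pos hj]
          have he : c * c - -c * c = 2 * (c * c) := by ring
          rw [he, hc2]
          ring
        · have hnadj : ¬ G.Adj i j := by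
            rw [hAdj i j]
            rintro (⟨h, _⟩ | ⟨_, h⟩)
            exacts [hi h, hj h]
          simp only [somborMatrix, if_neg hnadj, hu, hv, if_neg hi, if_neg hj]
          ring
      have honepos : ∀ p q, p ≠ q → 0 < somborEigs G p → 0 < somborEigs G q → False :=
        fun p q hpq hp hq => sombor_no_two_pos G u v hform hpq hp hq
      have honeneg : ∀ p q, p ≠ q → somborEigs G p < 0 → somborEigs G q < 0 → False :=
        fun p q hpq hp hq => sombor_no_two_neg G u v hform hpq hp hq
      exact (energy_eq_of_few G honepos honeneg).symm
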